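/- arXiv:2401.15972 — 2 statements merged into one kernel-verified Lean document; each statement's English description precedes it below -/
import Mathlib

section
/- For every n ≥ 1, the cube of the 3-norm of the Fibonacci vector q_n satisfies ∑_{i=1}^n F_i^3 = (1/2)(F_n · F_{n+1}^2 + (−1)^{n+1} · F_{n−1} + 1). -/
lemma fib_cassini (n : ℕ) :
    (Nat.fib (n+1) : ℝ)^2 - Nat.fib (n+1) * Nat.fib n - (Nat.fib n : ℝ)^2 = (-1)^n := by
  induction n with
  | zero => simp
  | succ n ih =>
    rw [Nat.fib_add_two]
    push_cast
    push_cast at ih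
    ring_nf
    ring_nf at ih
    linarith [ih]

/-- For `n ≥ 1`,
`∑_{i=1}^n (F i)^3 = (1/2) * (F n * (F (n+1))^2 + (-1)^(n+1) * F (n-1) + 1)`. -/
theorem fib_threenorm_cube (n : ℕ) (hn : 1 ≤ n) :
    ∑ i ∈ Finset.Icc 1 n, (Nat.fib i : ℝ) ^ 3 =
      (1 / 2) * ((Nat.fib n : ℝ) * (Nat.fib (n + 1) : ℝ) ^ 2 +
        (-1 : ℝ) ^ (n + 1) * (Nat.fib (n - 1) : ℝ) + 1) := by
  induction n with
  | zero => omega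
  | succ n ih =>
    rcases Nat.eq_zero_or_pos n with rfl | hpos
    · norm_num
    · rw [Finset.sum_Icc_succ_top (by omega), ih hpos]
      have h1 : n - 1 + 1 = n := by omega
      have h2 : (Nat.fib (n-1) : ℝ) = Nat.fib (n+1) - Nat.fib n := by
        have := Nat.fib_add_two (n := n - 1)
        rw [h1] at this
        rw [show n - 1 + 2 = n + 1 by omega] at this
        push_cast [this]; ring
      have hc := fib_cassini n
      simp only [Nat.add_sub_cancel, Nat.fib_add_two, h2]
      push_cast
      have hs : (-1 : ℝ)^(n+1+1) = (-1)^n := by ring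
      have hs2 : (-1 : ℝ)^(n+1) = -(-1)^n := by ring
      rw [hs, hs2]
      nlinarith [hc]
end

section
/- For all n ≥ 0, r ≥ 1, and every real p > 0, the p-th power of the p-distance between the (n+3,r)-Fibonacci vector x = (F_{n+4}, …, F_{n+r+3}) and the (n,r)-Fibonacci vector y = (F_{n+1}, …, F_{n+r}) equals F_3^p · ∑_{i=1}^r F_{n+i+1}^p; that is, ∑_{i=1}^r (F_{n+i+3} − F_{n+i})^p = 2^p · ∑_{i=1}^r F_{n+i+1}^p. -/
/-- For `n ≥ 0`, `r ≥ 1` and real `p > 0`, the `p`-th power of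
the `p`-distance between `x = q_{n+3,r}` and `y = q_{n,r}` equals
`F 3 ^ p * ∑_{i=1}^r F (n+i+1) ^ p`, i.e.
`∑_{i=1}^r (F (n+i+3) - F (n+i)) ^ p = 2 ^ p * ∑_{i=1}^r F (n+i+1) ^ p`. -/
theorem fib_pdist_three_apart (n r : ℕ) (hr : 1 ≤ r) (p : ℝ) (hp : 0 < p) :
    ∑ i ∈ Finset.Icc 1 r, ((Nat.fib (n + i + 3) : ℝ) - (Nat.fib (n + i) : ℝ)) ^ p =
      (2 : ℝ) ^ p * ∑ i ∈ Finset.Icc 1 r, (Nat.fib (n + i + 1) : ℝ) ^ p := by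
  rw [Finset.mul_sum]
  refine Finset.sum_congr rfl fun i _ => ?_
  have h : (Nat.fib (n + i + 3) : ℝ) - (Nat.fib (n + i) : ℝ)
      = 2 * (Nat.fib (n + i + 1) : ℝ) := by
    have := Nat.fib_add_two (n := n + i + 1)
    have := Nat.fib_add_two (n := n + i)
    push_cast [show n + i + 3 = (n + i + 1) + 2 from rfl, Nat.fib_add_two]
    ring
  rw [h, Real.mul_rpow (by norm_num) (by positivity)]
end
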